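/- For every integer n ≥ 2, the independence number of the edge-clique graph of the cocktail party graph satisfies α(K_e(cp(n))) = 4. -/

import Mathlib

namespace ECG

/-- The edge-clique graph `K_e(G)`: its vertices are the edges of `G`, and two distinct
edges are adjacent exactly when all their endpoints are pairwise adjacent in `G`
(i.e. the two edges lie in a common clique of `G`). -/
def edgeCliqueGraph {V : Type*} (G : SimpleGraph V) : SimpleGraph G.edgeSet where
  Adj e f := e ≠ f ∧ G.IsClique {v | v ∈ (e : Sym2 V) ∨ v ∈ (f : Sym2 V)}
  symm := by
    refine ⟨?_⟩
    rintro e f ⟨hne, hcl⟩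
    refine ⟨hne.symm, ?_⟩
    have h : {v | v ∈ (f : Sym2 V) ∨ v ∈ (e : Sym2 V)} =
        {v | v ∈ (e : Sym2 V) ∨ v ∈ (f : Sym2 V)} := by
      ext v; exact or_comm
    rw [h]; exact hcl
  loopless := ⟨fun e h => h.1 rfl⟩

/-- A set of vertices is independent when no two of its members are adjacent. -/
def IsIndepSet {V : Type*} (G : SimpleGraph V) (S : Set V) : Prop :=
  S.Pairwise fun a b => ¬ G.Adj a b

/-- The independence number `α(G)`: the maximum cardinality of an independent set. -/
noncomputable def indepNum {V : Type*} (G : SimpleGraph V) : ℕ :=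
  sSup {n | ∃ S : Finset V, IsIndepSet G ↑S ∧ S.card = n}

end ECG

namespace ECG

/-- The cocktail party graph `cp(n)`: the complement of a perfect matching on `2n`
vertices. The vertices come in `n` pairs (indexed by `Fin n`), and two distinct
vertices are adjacent exactly when they do not belong to the same pair. -/
def cocktailParty (n : ℕ) : SimpleGraph (Fin n × Fin 2) where
  Adj a b := a.1 ≠ b.1
  symm := ⟨fun _ _ h => h.symm⟩
  loopless := ⟨fun _ h => h rfl⟩

end ECG

namespace CP

open ECG

variable {n : ℕ}

/-- the partner of a vertex -/
def pr (v : Fin n × Fin 2) : Fin n × Fin 2 := (v.1, v.2 + 1)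

lemma fin2_add_one_ne : ∀ a : Fin 2, a + 1 ≠ a := by decide

lemma pr_fst (v : Fin n × Fin 2) : (pr v).1 = v.1 := rfl

lemma pr_pr (v : Fin n × Fin 2) : pr (pr v) = v := by
  have : ∀ a : Fin 2, a + 1 + 1 = a := by decide
  simp [pr, this]

lemma pr_ne (v : Fin n × Fin 2) : pr v ≠ v := by
  intro h
  exact fin2_add_one_ne v.2 (congrArg Prod.snd h)

lemma pr_inj {v w : Fin n × Fin 2} (h : pr v = pr w) : v = w := by
  rw [← pr_pr v, h, pr_pr]

lemma eq_or_eq_pr {v w : Fin n × Fin 2} (h : v.1 = w.1) : v = w ∨ v = pr w := by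
  have h2 : ∀ a b : Fin 2, a = b ∨ a = b + 1 := by decide
  rcases h2 v.2 w.2 with h1 | h1
  · left; exact Prod.ext h h1
  · right; exact Prod.ext h h1

lemma adj_iff {a b : Fin n × Fin 2} : (cocktailParty n).Adj a b ↔ a.1 ≠ b.1 := Iff.rfl

/-- two distinct members of an edge are adjacent -/
lemma adj_of_mem_edge {α : Type*} {G : SimpleGraph α} {e : Sym2 α} (he : e ∈ G.edgeSet)
    {a b : α} (ha : a ∈ e) (hb : b ∈ e) (hab : a ≠ b) : G.Adj a b := by
  induction e using Sym2.ind with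
  | _ u v =>
    rw [SimpleGraph.mem_edgeSet] at he
    rw [Sym2.mem_iff] at ha hb
    rcases ha with rfl | rfl <;> rcases hb with rfl | rfl
    · exact absurd rfl hab
    · exact he
    · exact he.symm
    · exact absurd rfl hab

/-- key: independent in the edge-clique graph means every two edges conflict -/
lemma conflict {S : Set (cocktailParty n).edgeSet}
    (hS : IsIndepSet (edgeCliqueGraph (cocktailParty n)) S)
    {e f : (cocktailParty n).edgeSet} (he : e ∈ S) (hf : f ∈ S) (hef : e ≠ f) :
    ∃ v, v ∈ (e : Sym2 (Fin n × Fin 2)) ∧ pr v ∈ (f : Sym2 (Fin n × Fin 2)) := by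
  have h := hS he hf hef
  have h' : ¬ (e ≠ f ∧ (cocktailParty n).IsClique
      {v | v ∈ (e : Sym2 (Fin n × Fin 2)) ∨ v ∈ (f : Sym2 (Fin n × Fin 2))}) := h
  have hcl : ¬ (cocktailParty n).IsClique
      {v | v ∈ (e : Sym2 (Fin n × Fin 2)) ∨ v ∈ (f : Sym2 (Fin n × Fin 2))} := by
    intro hc; exact h' ⟨hef, hc⟩
  rw [SimpleGraph.isClique_iff, Set.Pairwise] at hcl
  push_neg at hcl
  obtain ⟨a, ha, b, hb, hab, hnadj⟩ := hcl
  have hcol : a.1 = b.1 := by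
    by_contra hc; exact hnadj hc
  have hbpr : b = pr a := by
    rcases eq_or_eq_pr hcol.symm with h1 | h1
    · exact absurd h1.symm hab
    · exact h1
  rcases ha with ha | ha <;> rcases hb with hb | hb
  · exact absurd (adj_iff.mp (adj_of_mem_edge e.2 ha hb hab)) (fun hc => hc hcol)
  · exact ⟨a, ha, hbpr ▸ hb⟩
  · refine ⟨b, hb, ?_⟩
    rw [hbpr, pr_pr]; exact ha
  · exact absurd (adj_iff.mp (adj_of_mem_edge f.2 ha hb hab)) (fun hc => hc hcol)

/-- if two conflicting edges share the vertex v, the other endpoints are partners -/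
lemma shared {f g : (cocktailParty n).edgeSet} {v x y : Fin n × Fin 2}
    (hf : (f : Sym2 (Fin n × Fin 2)) = s(v, x)) (hg : (g : Sym2 (Fin n × Fin 2)) = s(v, y))
    (hc : ∃ u, u ∈ (f : Sym2 (Fin n × Fin 2)) ∧ pr u ∈ (g : Sym2 (Fin n × Fin 2))) :
    y = pr x := by
  have hfx : v.1 ≠ x.1 := by
    have := f.2; rw [hf, SimpleGraph.mem_edgeSet] at this; exact this
  have hfy : v.1 ≠ y.1 := by
    have := g.2; rw [hg, SimpleGraph.mem_edgeSet] at this; exact this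
  obtain ⟨u, hu, hpu⟩ := hc
  rw [hf, Sym2.mem_iff] at hu
  rw [hg, Sym2.mem_iff] at hpu
  rcases hu with rfl | rfl
  · rcases hpu with h1 | h1
    · exact absurd (pr_ne u) (fun h => h h1)
    · exact absurd (congrArg Prod.fst h1) (by rw [pr_fst]; exact fun h => hfy h)
  · rcases hpu with h1 | h1
    · have : u = pr v := by rw [← pr_pr u, h1]
      exact absurd (congrArg Prod.fst this) (by rw [pr_fst]; exact fun h => hfx h.symm)
    · exact h1.symm

end CP

namespace CP
open ECG
variable {n : ℕ}

/-- no three edges of an independent family share a vertex -/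
lemma no_three {S : Set (cocktailParty n).edgeSet}
    (hS : IsIndepSet (edgeCliqueGraph (cocktailParty n)) S)
    {f g h : (cocktailParty n).edgeSet} (hf : f ∈ S) (hg : g ∈ S) (hh : h ∈ S)
    (hfg : f ≠ g) (hfh : f ≠ h) (hgh : g ≠ h) {q : Fin n × Fin 2}
    (hqf : q ∈ (f : Sym2 (Fin n × Fin 2))) (hqg : q ∈ (g : Sym2 (Fin n × Fin 2)))
    (hqh : q ∈ (h : Sym2 (Fin n × Fin 2))) : False := by
  obtain ⟨x, hx⟩ := Sym2.mem_iff_exists.mp hqf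
  obtain ⟨y, hy⟩ := Sym2.mem_iff_exists.mp hqg
  obtain ⟨z, hz⟩ := Sym2.mem_iff_exists.mp hqh
  have h1 : y = pr x := shared hx hy (conflict hS hf hg hfg)
  have h2 : z = pr x := shared hx hz (conflict hS hf hh hfh)
  apply hgh
  apply Subtype.ext
  rw [hy, hz, h1, h2]

/-- at most two members of an independent family contain a given vertex -/
lemma card_filter_le {S : Finset (cocktailParty n).edgeSet}
    (hS : IsIndepSet (edgeCliqueGraph (cocktailParty n)) (↑S : Set _))
    {T : Finset (cocktailParty n).edgeSet} {q : Fin n × Fin 2}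
    (hT : ∀ f ∈ T, f ∈ S ∧ q ∈ (f : Sym2 (Fin n × Fin 2))) : T.card ≤ 2 := by
  by_contra hc
  push_neg at hc
  obtain ⟨T', hT', hcard⟩ := Finset.exists_subset_card_eq (Nat.succ_le_of_lt hc)
  obtain ⟨a, b, c, hab, hac, hbc, rfl⟩ := Finset.card_eq_three.mp hcard
  have ha := hT a (hT' (by simp))
  have hb := hT b (hT' (by simp))
  have hcc := hT c (hT' (by simp))
  exact no_three hS (by exact_mod_cast ha.1) (by exact_mod_cast hb.1)
    (by exact_mod_cast hcc.1) hab hac hbc ha.2 hb.2 hcc.2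

/-- the main upper bound: an independent set in the edge-clique graph has at most 4 edges -/
lemma card_le_four {S : Finset (cocktailParty n).edgeSet}
    (hS : IsIndepSet (edgeCliqueGraph (cocktailParty n)) (↑S : Set _)) : S.card ≤ 4 := by
  by_contra hc
  push_neg at hc
  have h5 : 5 ≤ S.card := hc
  obtain ⟨e₁, he₁⟩ := Finset.card_pos.mp (show 0 < S.card by omega)
  obtain ⟨u, w, huw⟩ : ∃ u w, (e₁ : Sym2 (Fin n × Fin 2)) = s(u, w) :=
    Sym2.ind (fun u w => ⟨u, w, rfl⟩) (e₁ : Sym2 (Fin n × Fin 2))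
  have huw1 : u.1 ≠ w.1 := by
    have := e₁.2; rw [huw, SimpleGraph.mem_edgeSet] at this; exact this
  set S' := S.erase e₁ with hS'
  have hS'card : 4 ≤ S'.card := by
    rw [hS', Finset.card_erase_of_mem he₁]; omega
  -- every member of S' contains pr u or pr w
  have hmem : ∀ f ∈ S', pr u ∈ (f : Sym2 (Fin n × Fin 2)) ∨ pr w ∈ (f : Sym2 (Fin n × Fin 2)) := by
    intro f hf
    have hfS : f ∈ S := Finset.mem_of_mem_erase hf
    have hne : e₁ ≠ f := fun h => (Finset.ne_of_mem_erase hf) h.symm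
    obtain ⟨v, hv, hpv⟩ := conflict hS he₁ hfS hne
    rw [huw, Sym2.mem_iff] at hv
    rcases hv with rfl | rfl
    · left; exact hpv
    · right; exact hpv
  set A := S'.filter (fun f : (cocktailParty n).edgeSet => pr u ∈ (↑f : Sym2 (Fin n × Fin 2))) with hA
  set B := S'.filter (fun f : (cocktailParty n).edgeSet => pr u ∉ (↑f : Sym2 (Fin n × Fin 2))) with hB
  have hAcard : A.card ≤ 2 := by
    apply card_filter_le hS (T := A)
    intro f hf
    rw [hA, Finset.mem_filter] at hf
    exact ⟨Finset.mem_of_mem_erase hf.1, hf.2⟩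
  have hBw : ∀ f ∈ B, f ∈ S ∧ pr w ∈ (f : Sym2 (Fin n × Fin 2)) := by
    intro f hf
    rw [hB, Finset.mem_filter] at hf
    refine ⟨Finset.mem_of_mem_erase hf.1, ?_⟩
    rcases hmem f hf.1 with h | h
    · exact absurd h hf.2
    · exact h
  have hBcard : B.card ≤ 2 := card_filter_le hS hBw
  have hsum : A.card + B.card = S'.card := Finset.card_filter_add_card_filter_not _
  have hA2 : A.card = 2 := by omega
  have hB2 : B.card = 2 := by omega
  obtain ⟨f₁, f₂, hf12, hAeq⟩ := Finset.card_eq_two.mp hA2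
  obtain ⟨g₁, g₂, hg12, hBeq⟩ := Finset.card_eq_two.mp hB2
  -- memberships
  have hf₁A : f₁ ∈ A := by rw [hAeq]; simp
  have hf₂A : f₂ ∈ A := by rw [hAeq]; simp
  have hg₁B : g₁ ∈ B := by rw [hBeq]; simp
  have hg₂B : g₂ ∈ B := by rw [hBeq]; simp
  have hf₁ := Finset.mem_filter.mp hf₁A
  have hf₂ := Finset.mem_filter.mp hf₂A
  have hg₁ := Finset.mem_filter.mp hg₁B
  have hg₂ := Finset.mem_filter.mp hg₂B
  have hf₁S : f₁ ∈ S := Finset.mem_of_mem_erase hf₁.1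
  have hf₂S : f₂ ∈ S := Finset.mem_of_mem_erase hf₂.1
  have hg₁S : g₁ ∈ S := Finset.mem_of_mem_erase hg₁.1
  have hg₂S : g₂ ∈ S := Finset.mem_of_mem_erase hg₂.1
  have hfg11 : f₁ ≠ g₁ := fun h => hg₁.2 (h ▸ hf₁.2)
  have hfg12 : f₁ ≠ g₂ := fun h => hg₂.2 (h ▸ hf₁.2)
  have hfg21 : f₂ ≠ g₁ := fun h => hg₁.2 (h ▸ hf₂.2)
  -- forms of the four edges
  obtain ⟨x, hx⟩ := Sym2.mem_iff_exists.mp hf₁.2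
  obtain ⟨x₂, hx₂⟩ := Sym2.mem_iff_exists.mp hf₂.2
  obtain ⟨y, hy⟩ := (Sym2.mem_iff_exists.mp (hBw g₁ hg₁B).2)
  obtain ⟨y₂, hy₂⟩ := (Sym2.mem_iff_exists.mp (hBw g₂ hg₂B).2)
  have hx₂x : x₂ = pr x := shared hx hx₂ (conflict hS hf₁S hf₂S hf12)
  have hy₂y : y₂ = pr y := shared hy hy₂ (conflict hS hg₁S hg₂S hg12)
  -- column facts
  have hux1 : u.1 ≠ x.1 := by
    have := f₁.2; rw [hx, SimpleGraph.mem_edgeSet] at this; exact this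
  have hwy1 : w.1 ≠ y.1 := by
    have := g₁.2; rw [hy, SimpleGraph.mem_edgeSet] at this; exact this
  -- y avoids u's column
  have hy_ne_pru : y ≠ pr u := by
    intro h
    apply hg₁.2
    rw [hy, Sym2.mem_iff]; right; exact h.symm
  have hy_ne_u : y ≠ u := by
    intro h
    apply hg₂.2
    rw [hy₂, hy₂y, Sym2.mem_iff]; right; rw [h]
  have hyu1 : y.1 ≠ u.1 := by
    intro h
    rcases eq_or_eq_pr h with h1 | h1
    · exact hy_ne_u h1
    · exact hy_ne_pru h1
  -- the three conflict constraints
  have C1 : x = w ∨ y = pr x := by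
    obtain ⟨v, hv, hpv⟩ := conflict hS hf₁S hg₁S hfg11
    rw [hx, Sym2.mem_iff] at hv
    rw [hy, Sym2.mem_iff] at hpv
    rcases hv with rfl | rfl
    · rw [pr_pr] at hpv
      rcases hpv with h1 | h1
      · exact absurd (congrArg Prod.fst h1) huw1
      · exact absurd h1.symm hy_ne_u
    · rcases hpv with h1 | h1
      · left; exact pr_inj h1
      · right; exact h1.symm
  have C2 : x = w ∨ x = y := by
    obtain ⟨v, hv, hpv⟩ := conflict hS hf₁S hg₂S hfg12
    rw [hx, Sym2.mem_iff] at hv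
    rw [hy₂, hy₂y, Sym2.mem_iff] at hpv
    rcases hv with rfl | rfl
    · rw [pr_pr] at hpv
      rcases hpv with h1 | h1
      · exact absurd (congrArg Prod.fst h1) huw1
      · exact hy_ne_pru (by rw [h1, pr_pr]) |>.elim
    · rcases hpv with h1 | h1
      · left; exact pr_inj h1
      · right; exact pr_inj h1
  have C3 : x = pr w ∨ x = y := by
    obtain ⟨v, hv, hpv⟩ := conflict hS hf₂S hg₁S hfg21
    rw [hx₂, hx₂x, Sym2.mem_iff] at hv
    rw [hy, Sym2.mem_iff] at hpv
    rcases hv with rfl | rfl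
    · rw [pr_pr] at hpv
      rcases hpv with h1 | h1
      · exact absurd (congrArg Prod.fst h1) huw1
      · exact absurd h1.symm hy_ne_u
    · rw [pr_pr] at hpv
      rcases hpv with h1 | h1
      · left; exact h1
      · right; exact h1
  -- final contradiction
  have hxw_false : x ≠ w := by
    intro hxw
    rcases C3 with h1 | h1
    · rw [hxw] at h1; exact pr_ne w h1.symm
    · rw [hxw] at h1; exact hwy1 (congrArg Prod.fst h1)
  rcases C1 with h1 | h1
  · exact hxw_false h1
  · rcases C2 with h2 | h2
    · exact hxw_false h2
    · rw [← h2] at h1; exact pr_ne x h1.symm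


end CP

namespace CP
open ECG
variable {n : ℕ}

lemma i01_ne (hn : 2 ≤ n) : (⟨0, by omega⟩ : Fin n) ≠ ⟨1, by omega⟩ := by
  intro h
  have := congrArg Fin.val h
  simp at this

lemma adj01 (hn : 2 ≤ n) (a b : Fin 2) :
    (cocktailParty n).Adj (⟨0, by omega⟩, a) ((⟨1, by omega⟩ : Fin n), b) := i01_ne hn

def edg (hn : 2 ≤ n) (a b : Fin 2) : (cocktailParty n).edgeSet :=
  ⟨s(((⟨0, by omega⟩ : Fin n), a), ((⟨1, by omega⟩ : Fin n), b)),
    (SimpleGraph.mem_edgeSet _).mpr (adj01 hn a b)⟩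

lemma edg_inj (hn : 2 ≤ n) {a b a' b' : Fin 2} (h : edg hn a b = edg hn a' b') :
    a = a' ∧ b = b' := by
  have h' := Subtype.ext_iff.mp h
  simp only [edg, Sym2.eq_iff, Prod.mk.injEq] at h'
  rcases h' with ⟨⟨_, h1⟩, ⟨_, h2⟩⟩ | ⟨⟨h1, _⟩, _⟩
  · exact ⟨h1, h2⟩
  · exact absurd h1 (i01_ne hn)

lemma not_adj_edg (hn : 2 ≤ n) {a b a' b' : Fin 2} (h : ¬(a = a' ∧ b = b')) :
    ¬ (edgeCliqueGraph (cocktailParty n)).Adj (edg hn a b) (edg hn a' b') := by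
  rintro ⟨hne, hcl⟩
  by_cases hA : a = a'
  · have hb : b ≠ b' := fun hb => h ⟨hA, hb⟩
    have h1 : ((⟨1, by omega⟩ : Fin n), b) ∈
        {v | v ∈ (↑(edg hn a b) : Sym2 (Fin n × Fin 2)) ∨
             v ∈ (↑(edg hn a' b') : Sym2 (Fin n × Fin 2))} :=
      Or.inl (Sym2.mem_mk_right _ _)
    have h2 : ((⟨1, by omega⟩ : Fin n), b') ∈
        {v | v ∈ (↑(edg hn a b) : Sym2 (Fin n × Fin 2)) ∨
             v ∈ (↑(edg hn a' b') : Sym2 (Fin n × Fin 2))} :=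
      Or.inr (Sym2.mem_mk_right _ _)
    have hnev : ((⟨1, by omega⟩ : Fin n), b) ≠ ((⟨1, by omega⟩ : Fin n), b') := by
      intro hv; exact hb (congrArg Prod.snd hv)
    exact (hcl h1 h2 hnev) rfl
  · have h1 : ((⟨0, by omega⟩ : Fin n), a) ∈
        {v | v ∈ (↑(edg hn a b) : Sym2 (Fin n × Fin 2)) ∨
             v ∈ (↑(edg hn a' b') : Sym2 (Fin n × Fin 2))} :=
      Or.inl (Sym2.mem_mk_left _ _)
    have h2 : ((⟨0, by omega⟩ : Fin n), a') ∈
        {v | v ∈ (↑(edg hn a b) : Sym2 (Fin n × Fin 2)) ∨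
             v ∈ (↑(edg hn a' b') : Sym2 (Fin n × Fin 2))} :=
      Or.inr (Sym2.mem_mk_left _ _)
    have hnev : ((⟨0, by omega⟩ : Fin n), a) ≠ ((⟨0, by omega⟩ : Fin n), a') := by
      intro hv; exact hA (congrArg Prod.snd hv)
    exact (hcl h1 h2 hnev) rfl

lemma exists_indep4 (hn : 2 ≤ n) : ∃ S : Finset (cocktailParty n).edgeSet,
    IsIndepSet (edgeCliqueGraph (cocktailParty n)) ↑S ∧ S.card = 4 := by
  refine ⟨{edg hn 0 0, edg hn 0 1, edg hn 1 0, edg hn 1 1}, ?_, ?_⟩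
  · intro e he f hf hne
    simp only [Finset.coe_insert, Set.mem_insert_iff, Finset.coe_singleton,
      Set.mem_singleton_iff] at he hf
    rcases he with rfl | rfl | rfl | rfl <;> rcases hf with rfl | rfl | rfl | rfl <;>
      first
        | exact absurd rfl hne
        | exact not_adj_edg hn (by decide)
  · have hd : ∀ a b a' b' : Fin 2, ¬(a = a' ∧ b = b') → edg hn a b ≠ edg hn a' b' :=
      fun a b a' b' h heq => h (edg_inj hn heq)
    rw [Finset.card_insert_of_notMem, Finset.card_insert_of_notMem,
      Finset.card_insert_of_notMem, Finset.card_singleton]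
    · simp only [Finset.mem_singleton]
      exact hd _ _ _ _ (by decide)
    · simp only [Finset.mem_insert, Finset.mem_singleton]
      push_neg
      exact ⟨hd _ _ _ _ (by decide), hd _ _ _ _ (by decide)⟩
    · simp only [Finset.mem_insert, Finset.mem_singleton]
      push_neg
      exact ⟨hd _ _ _ _ (by decide), hd _ _ _ _ (by decide), hd _ _ _ _ (by decide)⟩

end CP

/-- For every integer `n ≥ 2`, the independence number of the edge-clique
graph of the cocktail party graph `cp(n)` equals 4. -/
theorem indepNum_edgeCliqueGraph_cocktailParty (n : ℕ) (hn : 2 ≤ n) :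
    ECG.indepNum (ECG.edgeCliqueGraph (ECG.cocktailParty n)) = 4 := by
  obtain ⟨S4, hind4, hcard4⟩ := CP.exists_indep4 hn
  have h4mem : 4 ∈ {m | ∃ S : Finset (ECG.cocktailParty n).edgeSet,
      ECG.IsIndepSet (ECG.edgeCliqueGraph (ECG.cocktailParty n)) ↑S ∧ S.card = m} :=
    ⟨S4, hind4, hcard4⟩
  have hub : ∀ m ∈ {m | ∃ S : Finset (ECG.cocktailParty n).edgeSet,
      ECG.IsIndepSet (ECG.edgeCliqueGraph (ECG.cocktailParty n)) ↑S ∧ S.card = m},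
      m ≤ 4 := by
    rintro m ⟨S, hS, rfl⟩
    exact CP.card_le_four hS
  rw [ECG.indepNum]
  exact le_antisymm (csSup_le ⟨4, h4mem⟩ hub) (le_csSup ⟨4, hub⟩ h4mem)
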